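/- Assume conditions (C1) and (C2) and the a_min bound (Eq. 13) with 0 < a_min ≤ a_max. Then for every a in the box B and every i ∈ {1,…,n}, the i-th absolute row sum of the Jacobian of the MFPI map satisfies Σ_{g≠i} (λβ_{i,i} − λα_{i,i})·|λα_{i,g} − λβ_{i,g}| / (4·a_g²·D_i(a)²) < 1; in particular the L∞ operator norm of the Jacobian of F is strictly less than 1 everywhere on B. -/

import Mathlib

/-- Denominator `D_i(a)` of the MFPI map. -/
noncomputable def Dden (n : ℕ) (Pβ Pα : Fin n → ℝ) (lβ lα : Fin n → Fin n → ℝ)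
    (a : Fin n → ℝ) (i : Fin n) : ℝ :=
  Pβ i - Pα i + ∑ g ∈ Finset.univ.erase i, (lα i g - lβ i g) / (2 * a g)

set_option maxHeartbeats 1000000 in
/-- Under conditions (C1), (C2) and the `a_min` bound (Eq. 13), each absolute row sum
    of the Jacobian of the MFPI map is strictly less than 1 everywhere on the box `B`;
    in particular `L∞(F'(a)) < 1` on `B`. -/
theorem jacobian_row_sums_lt_one
    (n : ℕ) (hn : 1 ≤ n)
    (Pβ Pα : Fin n → ℝ) (lβ lα : Fin n → Fin n → ℝ)
    (amin amax : ℝ) (hamin : 0 < amin) (haminmax : amin ≤ amax)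
    (hC1 : ∀ i, 0 < lβ i i - lα i i)
    (hC2 : ∀ i, 0 < Pβ i - Pα i)
    (hEq13 : ∀ i : Fin n,
      (Real.sqrt ((lβ i i - lα i i) *
          ∑ g ∈ Finset.univ.erase i, |lα i g - lβ i g|)
        - ∑ g ∈ (Finset.univ.erase i).filter (fun g => lα i g - lβ i g < 0),
            (lα i g - lβ i g))
      / (2 * (Pβ i - Pα i)
        + ∑ g ∈ (Finset.univ.erase i).filter (fun g => 0 ≤ lα i g - lβ i g),
            (lα i g - lβ i g) / amax)
      < amin) :
    ∀ a : Fin n → ℝ, (∀ g, amin ≤ a g ∧ a g ≤ amax) →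
      ∀ i : Fin n,
        (∑ g ∈ Finset.univ.erase i,
            (lβ i i - lα i i) * |lα i g - lβ i g|
              / (4 * (a g) ^ 2 * (Dden n Pβ Pα lβ lα a i) ^ 2)) < 1 := by
  intro a ha i
  have hamax : 0 < amax := lt_of_lt_of_le hamin haminmax
  have hag : ∀ g, 0 < a g := fun g => lt_of_lt_of_le hamin (ha g).1
  set c := lβ i i - lα i i with hc_def
  have hc : 0 < c := hC1 i
  set E := (Finset.univ : Finset (Fin n)).erase i with hE
  set d : Fin n → ℝ := fun g => lα i g - lβ i g with hd_def
  set T := ∑ g ∈ E, |d g| with hT_def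
  have hT0 : 0 ≤ T := Finset.sum_nonneg fun g _ => abs_nonneg _
  have hdP : 0 < Pβ i - Pα i := hC2 i
  have hdenpos : 0 < 2 * (Pβ i - Pα i)
      + ∑ g ∈ E.filter (fun g => 0 ≤ d g), d g / amax := by
    have h : 0 ≤ ∑ g ∈ E.filter (fun g => 0 ≤ d g), d g / amax :=
      Finset.sum_nonneg fun g hg => div_nonneg (Finset.mem_filter.mp hg).2 hamax.le
    linarith
  have h13 := hEq13 i
  rw [div_lt_iff₀ hdenpos] at h13
  -- lower bound L for Dden
  set L := (Pβ i - Pα i)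
      + ∑ g ∈ E, (if 0 ≤ d g then d g / (2 * amax) else d g / (2 * amin)) with hL_def
  have hsplit : ∑ g ∈ E, (if 0 ≤ d g then d g / (2 * amax) else d g / (2 * amin))
      = (∑ g ∈ E.filter (fun g => 0 ≤ d g), d g / (2 * amax))
        + ∑ g ∈ E.filter (fun g => ¬ 0 ≤ d g), d g / (2 * amin) :=
    Finset.sum_ite _ _
  have hfilter : E.filter (fun g => ¬ 0 ≤ d g) = E.filter (fun g => d g < 0) := by
    apply Finset.filter_congr
    intro g _
    simp [not_le]
  have key : Real.sqrt (c * T) < 2 * amin * L := by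
    have heq : amin * (2 * (Pβ i - Pα i)
        + ∑ g ∈ E.filter (fun g => 0 ≤ d g), d g / amax)
        + ∑ g ∈ E.filter (fun g => d g < 0), d g = 2 * amin * L := by
      rw [hL_def, hsplit, hfilter]
      have h1 : ∑ g ∈ E.filter (fun g => 0 ≤ d g), amin * (d g / amax)
          = ∑ g ∈ E.filter (fun g => 0 ≤ d g), 2 * amin * (d g / (2 * amax)) := by
        apply Finset.sum_congr rfl
        intro g _
        field_simp
      have h2 : ∑ g ∈ E.filter (fun g => d g < 0), d g
          = ∑ g ∈ E.filter (fun g => d g < 0), 2 * amin * (d g / (2 * amin)) := by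
        apply Finset.sum_congr rfl
        intro g _
        field_simp
      simp only [mul_add, Finset.mul_sum]
      rw [h1, h2]
      ring
    calc Real.sqrt (c * T)
        < amin * (2 * (Pβ i - Pα i)
            + ∑ g ∈ E.filter (fun g => 0 ≤ d g), d g / amax)
          + ∑ g ∈ E.filter (fun g => d g < 0), d g := by linarith
      _ = 2 * amin * L := heq
  have hLpos : 0 < L := by
    have := Real.sqrt_nonneg (c * T)
    nlinarith
  set D := Dden n Pβ Pα lβ lα a i with hD_def
  have hDL : L ≤ D := by
    rw [hL_def, hD_def, Dden]
    apply add_le_add le_rfl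
    apply Finset.sum_le_sum
    intro g _
    by_cases hg : 0 ≤ d g
    · simp only [hg, if_true]
      rw [div_le_div_iff₀ (by linarith) (by have := hag g; linarith)]
      have h2' := (ha g).2
      simp only [hd_def] at hg ⊢
      nlinarith
    · simp only [hg, if_false]
      push_neg at hg
      rw [div_le_div_iff₀ (by linarith) (by have := hag g; linarith)]
      have h1' := (ha g).1
      simp only [hd_def] at hg ⊢
      nlinarith
  have hDpos : 0 < D := lt_of_lt_of_le hLpos hDL
  have hsqrtD : Real.sqrt (c * T) < 2 * amin * D := by
    calc Real.sqrt (c * T) < 2 * amin * L := key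
      _ ≤ 2 * amin * D := by nlinarith
  have hcT : c * T < 4 * amin ^ 2 * D ^ 2 := by
    have h1 : c * T = Real.sqrt (c * T) ^ 2 :=
      (Real.sq_sqrt (by positivity)).symm
    have h2 : Real.sqrt (c * T) ^ 2 < (2 * amin * D) ^ 2 := by
      apply pow_lt_pow_left₀ hsqrtD (Real.sqrt_nonneg _) (by norm_num)
    nlinarith
  have hdenK : 0 < 4 * amin ^ 2 * D ^ 2 := by positivity
  calc ∑ g ∈ E, c * |d g| / (4 * (a g) ^ 2 * D ^ 2)
      ≤ ∑ g ∈ E, c * |d g| / (4 * amin ^ 2 * D ^ 2) := by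
        apply Finset.sum_le_sum
        intro g _
        apply div_le_div_of_nonneg_left (by positivity) (by positivity)
        have h1' : amin ^ 2 ≤ (a g) ^ 2 := by nlinarith [(ha g).1, hamin]
        linarith [mul_le_mul_of_nonneg_right h1' (sq_nonneg D)]
    _ = c * T / (4 * amin ^ 2 * D ^ 2) := by
        rw [hT_def, ← Finset.sum_div, Finset.mul_sum]
    _ < 1 := by
        rw [div_lt_one hdenK]
        linarith
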